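/- For all integers n ≥ 1 and k ≥ 1, S(n,k) = (1 − λ/k)^k · Σ_{j=0}^{k} C(k,j)·(−Λ)^j·D_{n,k}(j). -/

import Mathlib

open Finset

/-- `S(n,k) = Stirling(n,k)·k!/kⁿ`, written via the sieve formula. -/
noncomputable def Snk (n k : ℕ) : ℝ :=
  ∑ j ∈ Finset.range (k + 1), (k.choose j : ℝ) * (-1) ^ j * (1 - (j : ℝ) / k) ^ n

/-- `D_{n,k}(j) = Σ_{l=0}^{j} C(j,l)·(−1)^{j−l}·(e^{l/k}(1 − l/k))ⁿ`. -/
noncomputable def Dnk (n k j : ℕ) : ℝ :=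
  ∑ l ∈ Finset.range (j + 1),
    (j.choose l : ℝ) * (-1) ^ (j - l) * (Real.exp ((l : ℝ) / k) * (1 - (l : ℝ) / k)) ^ n

/-- The finite-difference identity: with `λ := k·e^{−n/k}` and
`Λ := e^{−n/k}/(1 − e^{−n/k})`,
`S(n,k) = (1 − λ/k)^k · Σ_{j=0}^{k} C(k,j)·(−Λ)^j·D_{n,k}(j)`. -/
theorem Snk_finite_difference_identity (n k : ℕ) (hn : 1 ≤ n) (hk : 1 ≤ k) :
    Snk n k =
      (1 - (k : ℝ) * Real.exp (-(n : ℝ) / k) / k) ^ k *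
        ∑ j ∈ Finset.range (k + 1),
          (k.choose j : ℝ) *
            (-(Real.exp (-(n : ℝ) / k) / (1 - Real.exp (-(n : ℝ) / k)))) ^ j *
            Dnk n k j := by
  have hk0 : (k : ℝ) ≠ 0 := by
    exact_mod_cast Nat.one_le_iff_ne_zero.mp hk
  set q : ℝ := Real.exp (-(n : ℝ) / k) with hqdef
  have hq0 : 0 < q := Real.exp_pos _
  have hq1 : q < 1 := by
    rw [hqdef, ← Real.exp_zero]
    apply Real.exp_lt_exp.mpr
    apply div_neg_of_neg_of_pos
    · simp only [neg_neg, Left.neg_neg_iff]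
      exact_mod_cast hn
    · exact_mod_cast hk
  have h1q : (0 : ℝ) < 1 - q := by linarith
  have h1q' : (1 : ℝ) - q ≠ 0 := ne_of_gt h1q
  set Λ : ℝ := q / (1 - q) with hΛdef
  have hΛ1 : Λ + 1 = 1 / (1 - q) := by
    rw [hΛdef]; field_simp; ring
  rw [show (1 : ℝ) - (k : ℝ) * q / k = 1 - q by field_simp]
  set g : ℕ → ℝ := fun l => (Real.exp ((l : ℝ) / k) * (1 - (l : ℝ) / k)) ^ n with hgdef
  set F : ℕ → ℕ → ℝ := fun j l =>
    (1 - q) ^ k * ((k.choose j : ℝ) * (-Λ) ^ j * ((j.choose l : ℝ) * (-1) ^ (j - l) * g l))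
    with hFdef
  have hrhs :
      (1 - q) ^ k * ∑ j ∈ Finset.range (k + 1),
          (k.choose j : ℝ) * (-Λ) ^ j * Dnk n k j
        = ∑ j ∈ Finset.range (k + 1), ∑ l ∈ Finset.range (j + 1), F j l := by
    rw [Finset.mul_sum]
    refine Finset.sum_congr rfl fun j _ => ?_
    rw [Dnk, Finset.mul_sum, Finset.mul_sum]
  rw [hrhs]
  have hswap :
      ∑ j ∈ Finset.range (k + 1), ∑ l ∈ Finset.range (j + 1), F j l
        = ∑ l ∈ Finset.range (k + 1), ∑ j ∈ Finset.Ico l (k + 1), F j l := by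
    simp only [← Nat.Ico_zero_eq_range]
    exact (Finset.sum_Ico_Ico_comm 0 (k + 1) fun l j => F j l).symm
  rw [hswap]
  rw [Snk]
  refine Finset.sum_congr rfl fun l hl => ?_
  have hlk : l ≤ k := by
    simpa using Nat.lt_succ_iff.mp (Finset.mem_range.mp hl)
  rw [Finset.sum_Ico_eq_sum_range, show k + 1 - l = (k - l) + 1 by omega]
  have hterm : ∀ m ∈ Finset.range (k - l + 1),
      F (l + m) l
        = ((k.choose l : ℝ) * ((1 - q) ^ k * (-Λ) ^ l * g l))
            * (((k - l).choose m : ℝ) * Λ ^ m) := by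
    intro m hm
    have hm' : m ≤ k - l := Nat.lt_succ_iff.mp (Finset.mem_range.mp hm)
    have hcm : k.choose (l + m) * (l + m).choose l = k.choose l * (k - l).choose m := by
      have := Nat.choose_mul (n := k) (k := l + m) (s := l) (by omega)
      simpa [Nat.add_sub_cancel_left] using this
    have hcmR : (k.choose (l + m) : ℝ) * ((l + m).choose l : ℝ)
        = (k.choose l : ℝ) * ((k - l).choose m : ℝ) := by exact_mod_cast hcm
    simp only [hFdef, Nat.add_sub_cancel_left]
    have hpow : (-Λ) ^ (l + m) * (-1 : ℝ) ^ m = (-Λ) ^ l * Λ ^ m := by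
      rw [pow_add, mul_assoc, ← mul_pow, neg_mul_neg, mul_one]
    calc (1 - q) ^ k * ((k.choose (l + m) : ℝ) * (-Λ) ^ (l + m)
            * (((l + m).choose l : ℝ) * (-1) ^ m * g l))
        = ((k.choose (l + m) : ℝ) * ((l + m).choose l : ℝ))
            * ((-Λ) ^ (l + m) * (-1 : ℝ) ^ m) * ((1 - q) ^ k * g l) := by ring
      _ = ((k.choose l : ℝ) * ((k - l).choose m : ℝ))
            * ((-Λ) ^ l * Λ ^ m) * ((1 - q) ^ k * g l) := by rw [hcmR, hpow]
      _ = ((k.choose l : ℝ) * ((1 - q) ^ k * (-Λ) ^ l * g l))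
            * (((k - l).choose m : ℝ) * Λ ^ m) := by ring
  rw [Finset.sum_congr rfl hterm, ← Finset.mul_sum]
  have hbin : ∑ m ∈ Finset.range (k - l + 1), (((k - l).choose m : ℝ)) * Λ ^ m
      = (Λ + 1) ^ (k - l) := by
    rw [add_pow]
    refine Finset.sum_congr rfl fun m hm => ?_
    rw [one_pow]; ring
  rw [hbin, hΛ1]
  have hql : q ^ l * Real.exp ((l : ℝ) / k) ^ n = 1 := by
    rw [hqdef, ← Real.exp_nat_mul, ← Real.exp_nat_mul, ← Real.exp_add,
      show (l : ℝ) * (-(n : ℝ) / k) + (n : ℝ) * ((l : ℝ) / k) = 0 by ring, Real.exp_zero]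
  have c1 : ((1 : ℝ) - q) ^ l ≠ 0 := pow_ne_zero _ h1q'
  have c2 : ((1 : ℝ) - q) ^ (k - l) ≠ 0 := pow_ne_zero _ h1q'
  have hpk : ((1 : ℝ) - q) ^ k = (1 - q) ^ l * (1 - q) ^ (k - l) := by
    rw [← pow_add]; congr 1; omega
  have hgl : g l = Real.exp ((l : ℝ) / k) ^ n * (1 - (l : ℝ) / k) ^ n := by
    rw [hgdef]; exact mul_pow _ _ _
  have e1 : (-Λ) ^ l = (-1 : ℝ) ^ l * q ^ l * (((1 - q) ^ l)⁻¹) := by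
    rw [hΛdef, show -(q / (1 - q)) = (-1) * q * (1 - q)⁻¹ by rw [div_eq_mul_inv]; ring,
      mul_pow, mul_pow, inv_pow]
  have e2 : ((1 : ℝ) / (1 - q)) ^ (k - l) = ((1 - q) ^ (k - l))⁻¹ := by
    rw [one_div, inv_pow]
  symm
  calc (k.choose l : ℝ) * ((1 - q) ^ k * (-Λ) ^ l * g l) * (1 / (1 - q)) ^ (k - l)
      = (k.choose l : ℝ) * ((-1 : ℝ) ^ l * (1 - (l : ℝ) / k) ^ n)
          * (q ^ l * Real.exp ((l : ℝ) / k) ^ n)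
          * ((1 - q) ^ l * ((1 - q) ^ l)⁻¹)
          * ((1 - q) ^ (k - l) * ((1 - q) ^ (k - l))⁻¹) := by
        rw [hpk, hgl, e1, e2]; ring
    _ = (k.choose l : ℝ) * (-1) ^ l * (1 - (l : ℝ) / k) ^ n := by
        rw [hql, mul_inv_cancel₀ c1, mul_inv_cancel₀ c2]; ring
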